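/- The relations [L_m, L_n] = (m-n)L_{m+n}, [L_m, J_n] = -n J_{m+n}, [L_m, P^i_n] = (m-n)P^i_{m+n}, [J_m, P^i_n] = Σ_j ε_{ij}P^j_{m+n}, [P^i_m, P^j_n] = ε_{ij}Θ_{m+n}, [L_m, Θ_n] = (2m-n)Θ_{m+n}, with all other brackets zero (in particular [J_m, Θ_n] = [Θ_m, Θ_n] = [J_m, J_n] = 0), satisfy the Jacobi identity and hence define a Lie algebra 𝔤̌ on the span of L_m, J_m, P^1_m, P^2_m, Θ_m (m ∈ ℤ). -/

import Mathlib

/-- Basis of the novel algebra `𝔤̌`: `L m`, `J m`, `P i m`, `Θ m` for `m ∈ ℤ`. -/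
inductive GCAGen5 : Type
  | L : ℤ → GCAGen5
  | J : ℤ → GCAGen5
  | P : Fin 2 → ℤ → GCAGen5
  | Th : ℤ → GCAGen5
  deriving DecidableEq

/-- `ε_{12} = -ε_{21} = 1`, `ε_{11} = ε_{22} = 0`. -/
def eps : Fin 2 → Fin 2 → ℤ := fun i j =>
  if i = 0 ∧ j = 1 then 1 else if i = 1 ∧ j = 0 then -1 else 0

open Finsupp

/-- Structure constants of `𝔤̌` on basis elements:
`[L_m,L_n] = (m-n)L_{m+n}`, `[L_m,J_n] = -n J_{m+n}`,
`[L_m,P^i_n] = (m-n)P^i_{m+n}`, `[J_m,P^i_n] = Σ_j ε_{ij} P^j_{m+n}`,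
`[P^i_m,P^j_n] = ε_{ij} Θ_{m+n}`, `[L_m,Θ_n] = (2m-n)Θ_{m+n}`,
all other brackets zero. -/
noncomputable def brCheck : GCAGen5 → GCAGen5 → (GCAGen5 →₀ ℂ)
  | .L m, .L n => single (.L (m + n)) ((m - n : ℤ) : ℂ)
  | .L m, .J n => single (.J (m + n)) ((-n : ℤ) : ℂ)
  | .J m, .L n => single (.J (m + n)) ((m : ℤ) : ℂ)
  | .L m, .P i n => single (.P i (m + n)) ((m - n : ℤ) : ℂ)
  | .P i n, .L m => single (.P i (m + n)) ((n - m : ℤ) : ℂ)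
  | .J m, .P i n => ∑ j : Fin 2, single (.P j (m + n)) ((eps i j : ℤ) : ℂ)
  | .P i n, .J m => ∑ j : Fin 2, single (.P j (m + n)) ((-eps i j : ℤ) : ℂ)
  | .P i m, .P j n => single (.Th (m + n)) ((eps i j : ℤ) : ℂ)
  | .L m, .Th n => single (.Th (m + n)) ((2 * m - n : ℤ) : ℂ)
  | .Th n, .L m => single (.Th (m + n)) ((n - 2 * m : ℤ) : ℂ)
  | _, _ => 0

/-- The bracket extended bilinearly to the span of the basis. -/
noncomputable def BrCheck (x y : GCAGen5 →₀ ℂ) : GCAGen5 →₀ ℂ :=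
  x.sum fun i a => y.sum fun j b => (a * b) • brCheck i j

noncomputable def innerBr (i : GCAGen5) : (GCAGen5 →₀ ℂ) →ₗ[ℂ] (GCAGen5 →₀ ℂ) :=
  Finsupp.lsum ℂ fun j => LinearMap.toSpanSingleton ℂ _ (brCheck i j)

noncomputable def BrL : (GCAGen5 →₀ ℂ) →ₗ[ℂ] (GCAGen5 →₀ ℂ) →ₗ[ℂ] (GCAGen5 →₀ ℂ) :=
  Finsupp.lsum ℂ fun i => LinearMap.toSpanSingleton ℂ _ (innerBr i)

lemma innerBr_apply (i : GCAGen5) (y : GCAGen5 →₀ ℂ) :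
    innerBr i y = y.sum fun j b => b • brCheck i j := by
  simp [innerBr, Finsupp.lsum_apply, LinearMap.toSpanSingleton_apply, Finsupp.sum]

lemma BrCheck_eq (x y : GCAGen5 →₀ ℂ) : BrCheck x y = BrL x y := by
  rw [BrCheck, BrL, Finsupp.lsum_apply, LinearMap.finsupp_sum_apply]
  refine Finsupp.sum_congr fun i _ => ?_
  rw [LinearMap.toSpanSingleton_apply, LinearMap.smul_apply, innerBr_apply, Finsupp.smul_sum]
  refine Finsupp.sum_congr fun j _ => ?_
  rw [smul_smul]

lemma BrL_single (i : GCAGen5) (a : ℂ) (y : GCAGen5 →₀ ℂ) :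
    BrL (Finsupp.single i a) y = a • innerBr i y := by
  rw [BrL, Finsupp.lsum_single, LinearMap.toSpanSingleton_apply, LinearMap.smul_apply]

lemma BrL_single_one (i : GCAGen5) (y : GCAGen5 →₀ ℂ) :
    BrL (Finsupp.single i (1:ℂ)) y = innerBr i y := by
  rw [BrL_single, one_smul]

lemma innerBr_single (i j : GCAGen5) (b : ℂ) :
    innerBr i (Finsupp.single j b) = b • brCheck i j := by
  rw [innerBr, Finsupp.lsum_single, LinearMap.toSpanSingleton_apply]

set_option maxHeartbeats 2000000 in
lemma jacBasis (i j k : GCAGen5) :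
    innerBr i (brCheck j k) + innerBr j (brCheck k i) + innerBr k (brCheck i j) = 0 := by
  rcases i with m | m | ⟨a, m⟩ | m <;> rcases j with n | n | ⟨b, n⟩ | n <;>
    rcases k with p | p | ⟨c, p⟩ | p <;>
    (try fin_cases a) <;> (try fin_cases b) <;> (try fin_cases c) <;>
    simp [brCheck, eps, Fin.sum_univ_two, innerBr_single, Finsupp.smul_single,
      smul_eq_mul, smul_add, smul_sub, map_add, -Finsupp.single_mul, sub_eq_add_neg,
      ← Finsupp.single_neg] <;>
    ring_nf <;>
    simp only [← Finsupp.single_neg, ← Finsupp.single_add, Finsupp.single_eq_zero] <;>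
    push_cast <;> ring

lemma brCheck_skew (i j : GCAGen5) : brCheck i j = - brCheck j i := by
  rcases i with m | m | ⟨p, m⟩ | m <;> rcases j with n | n | ⟨q, n⟩ | n <;>
    (try fin_cases p) <;> (try fin_cases q) <;>
    simp [brCheck, eps, Fin.sum_univ_two, ← Finsupp.single_neg, add_comm]

lemma BrL_skew (x y : GCAGen5 →₀ ℂ) : BrL x y = - BrL y x := by
  have h : BrL + BrL.flip = 0 := by
    ext i j
    simp [BrL_single_one, innerBr_single, brCheck_skew i j]
  have := DFunLike.congr_fun (DFunLike.congr_fun h x) y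
  simp only [LinearMap.add_apply, LinearMap.zero_apply, LinearMap.flip_apply] at this
  exact eq_neg_of_add_eq_zero_left this

lemma jacL (x y z : GCAGen5 →₀ ℂ) :
    BrL x (BrL y z) + BrL y (BrL z x) + BrL z (BrL x y) = 0 := by
  induction x using Finsupp.induction_linear with
  | zero => simp
  | add f g hf hg =>
    simp only [map_add, LinearMap.add_apply]
    calc _ = (BrL f (BrL y z) + BrL y (BrL z f) + BrL z (BrL f y))
            + (BrL g (BrL y z) + BrL y (BrL z g) + BrL z (BrL g y)) := by abel
    _ = 0 := by rw [hf, hg, add_zero]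
  | single i a =>
    induction y using Finsupp.induction_linear with
    | zero => simp
    | add f g hf hg =>
      simp only [map_add, LinearMap.add_apply]
      calc _ = (BrL _ (BrL f z) + BrL f (BrL z _) + BrL z (BrL _ f))
              + (BrL _ (BrL g z) + BrL g (BrL z _) + BrL z (BrL _ g)) := by abel
      _ = 0 := by rw [hf, hg, add_zero]
    | single j b =>
      induction z using Finsupp.induction_linear with
      | zero => simp
      | add f g hf hg =>
        simp only [map_add, LinearMap.add_apply]
        calc _ = (BrL _ (BrL _ f) + BrL _ (BrL f _) + BrL f (BrL _ _))
                + (BrL _ (BrL _ g) + BrL _ (BrL g _) + BrL g (BrL _ _)) := by abel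
        _ = 0 := by rw [hf, hg, add_zero]
      | single k c =>
        simp only [BrL_single, innerBr_single, map_smul, smul_smul]
        rw [show b * c * a = a*b*c by ring, show c * a * b = a*b*c by ring,
          show a * b * c = a*b*c by ring, ← smul_add, ← smul_add, jacBasis, smul_zero]

/-- The given structure constants satisfy alternativity and the Jacobi identity,
hence define a Lie algebra `𝔤̌` on the span of `L_m, J_m, P^1_m, P^2_m, Θ_m`. -/
theorem stmt14 :
    (∀ x : GCAGen5 →₀ ℂ, BrCheck x x = 0) ∧
    (∀ x y : GCAGen5 →₀ ℂ, BrCheck x y = - BrCheck y x) ∧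
    (∀ x y z : GCAGen5 →₀ ℂ,
      BrCheck x (BrCheck y z) + BrCheck y (BrCheck z x) + BrCheck z (BrCheck x y) = 0) := by
  refine ⟨fun x => ?_, fun x y => ?_, fun x y z => ?_⟩
  · have h := BrL_skew x x
    have h2 : (2:ℂ) • BrL x x = 0 := by
      rw [two_smul]; nth_rewrite 1 [h]; abel
    rw [BrCheck_eq]
    have := smul_eq_zero.mp h2
    simpa using this
  · rw [BrCheck_eq, BrCheck_eq, BrL_skew]
  · rw [BrCheck_eq, BrCheck_eq, BrCheck_eq, BrCheck_eq, BrCheck_eq, BrCheck_eq]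
    exact jacL x y z
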